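/- arXiv:1911.01144 — 2 statements merged into one kernel-verified Lean document; each statement's English description precedes it below -/
import Mathlib

section
/- Let ρ be a density operator on an N-qubit Hilbert space and let S = {s_1, ..., s_N} be a stabilizer generator set with spanned group S̄. Then Tr(ρ (((N−1)/2) I − (1/2) ∑_{i=1}^N s_i)) ≥ Tr(ρ ((1/2) I − ∏_{i=1}^N (I + s_i)/2)). That is, the alternative witness W_a has expectation value at least that of the standard witness W on every state. -/
open Matrix
open scoped ComplexOrder

section Aux

variable {n : Type*} [Fintype n] [DecidableEq n]

private lemma psd_of_herm_idem {A : Matrix n n ℂ} (hA : A.IsHermitian) (h : A * A = A) :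
    A.PosSemidef := by
  have : A = Aᴴ * A := by rw [hA.eq, h]
  rw [this]; exact posSemidef_conjTranspose_mul_self A

private lemma psd_mul_comm_proj {A Q : Matrix n n ℂ} (hA : A.IsHermitian) (hAi : A * A = A)
    (hQ : Q.PosSemidef) (hc : Commute A Q) : (A * Q).PosSemidef := by
  have : A * Q = A * Q * Aᴴ := by
    rw [hA.eq, mul_assoc, ← hc.eq, ← mul_assoc, hAi]
  rw [this]
  exact hQ.mul_mul_conjTranspose_same A

private lemma trace_nonneg_of_psd {A : Matrix n n ℂ} (hA : A.PosSemidef) : 0 ≤ A.trace := by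
  rw [Matrix.trace]
  apply Finset.sum_nonneg
  intro i _
  exact hA.diag_nonneg

private lemma trace_mul_nonneg {A B : Matrix n n ℂ} (hA : A.PosSemidef) (hB : B.PosSemidef) :
    0 ≤ (A * B).trace := by
  open scoped MatrixOrder in
  obtain ⟨S, hS⟩ := CStarAlgebra.nonneg_iff_eq_star_mul_self.mp hA.nonneg
  have h1 : (A * B).trace = (S * B * Sᴴ).trace := by
    rw [hS, star_eq_conjTranspose, mul_assoc, Matrix.trace_mul_comm]
  rw [h1]
  apply trace_nonneg_of_psd
  exact hB.mul_mul_conjTranspose_same S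

private lemma prod_props (L : List (Matrix n n ℂ)) (hherm : ∀ p ∈ L, p.IsHermitian)
    (hidem : ∀ p ∈ L, p * p = p) (hcomm : L.Pairwise Commute) :
    L.prod.IsHermitian ∧ L.prod * L.prod = L.prod := by
  induction L with
  | nil => simp [Matrix.IsHermitian, Matrix.isHermitian_one]
  | cons p L ih =>
    obtain ⟨hcp, hcL⟩ := List.pairwise_cons.mp hcomm
    obtain ⟨hH, hI⟩ := ih (fun q hq => hherm q (List.mem_cons_of_mem _ hq))
      (fun q hq => hidem q (List.mem_cons_of_mem _ hq)) hcL
    have hc : Commute p L.prod := Commute.list_prod_right _ _ hcp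
    have hpH := hherm p List.mem_cons_self
    have hpI := hidem p List.mem_cons_self
    constructor
    · rw [List.prod_cons, Matrix.IsHermitian, conjTranspose_mul, hH.eq, hpH.eq, hc.eq]
    · rw [List.prod_cons, mul_assoc, ← mul_assoc L.prod p, ← hc.eq, mul_assoc, hI,
        ← mul_assoc, hpI]

private lemma key_psd (L : List (Matrix n n ℂ)) (hherm : ∀ p ∈ L, p.IsHermitian)
    (hidem : ∀ p ∈ L, p * p = p) (hcomm : L.Pairwise Commute) :
    (((L.map (fun p => 1 - p)).sum + L.prod) - 1).PosSemidef := by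
  induction L with
  | nil => simpa using Matrix.PosSemidef.zero
  | cons p L ih =>
    obtain ⟨hcp, hcL⟩ := List.pairwise_cons.mp hcomm
    have hhL := fun q hq => hherm q (List.mem_cons_of_mem p hq)
    have hiL := fun q hq => hidem q (List.mem_cons_of_mem p hq)
    have hD := ih hhL hiL hcL
    obtain ⟨hPH, hPI⟩ := prod_props L hhL hiL hcL
    have hc : Commute p L.prod := Commute.list_prod_right _ _ hcp
    have hpH := hherm p List.mem_cons_self
    have hpI := hidem p List.mem_cons_self
    have hAH : (1 - p).IsHermitian := (isHermitian_one).sub hpH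
    have hAI : (1 - p) * (1 - p) = 1 - p := by
      simp [mul_sub, sub_mul, hpI]
    have hQ : (1 - L.prod).PosSemidef :=
      psd_of_herm_idem (isHermitian_one.sub hPH) (by
        simp [mul_sub, sub_mul, hPI])
    have hcAQ : Commute (1 - p) (1 - L.prod) := by
      have : Commute p (1 - L.prod) := (Commute.one_right p).sub_right hc
      exact (Commute.one_left _).sub_left this
    have hT : ((1 - p) * (1 - L.prod)).PosSemidef :=
      psd_mul_comm_proj hAH hAI hQ hcAQ
    have heq : (((List.cons p L).map (fun q => 1 - q)).sum + (p :: L).prod) - 1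
        = ((((L.map (fun q => 1 - q)).sum + L.prod) - 1)) + (1 - p) * (1 - L.prod) := by
      simp only [List.map_cons, List.sum_cons, List.prod_cons]
      noncomm_ring
    rw [heq]
    exact hD.add hT

end Aux

/-- For any density operator `ρ` on the `N`-qubit Hilbert space and any
stabilizer generator set `s₁,…,s_N` (pairwise commuting Hermitian involutions), the
alternative witness `W_a = ((N−1)/2)·I − (1/2)∑ᵢ sᵢ` has expectation value at least that of
the standard witness `W = (1/2)·I − ∏ᵢ (I+sᵢ)/2`. -/
theorem alternative_witness_ge_standard_witness
    {N : ℕ} (ρ : Matrix (Fin N → Fin 2) (Fin N → Fin 2) ℂ)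
    (hρ : ρ.PosSemidef) (hρtr : ρ.trace = 1)
    (s : Fin N → Matrix (Fin N → Fin 2) (Fin N → Fin 2) ℂ)
    (hherm : ∀ i, (s i).IsHermitian)
    (hsq : ∀ i, s i ^ 2 = 1)
    (hcomm : ∀ i j, Commute (s i) (s j)) :
    (ρ * ((((N : ℂ) - 1) / 2) • (1 : Matrix (Fin N → Fin 2) (Fin N → Fin 2) ℂ)
        - (2 : ℂ)⁻¹ • ∑ i, s i)).trace ≥
    (ρ * ((2 : ℂ)⁻¹ • (1 : Matrix (Fin N → Fin 2) (Fin N → Fin 2) ℂ)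
        - (List.ofFn fun i => (2 : ℂ)⁻¹ • (1 + s i)).prod)).trace := by
  set L : List (Matrix (Fin N → Fin 2) (Fin N → Fin 2) ℂ) :=
    List.ofFn fun i => (2 : ℂ)⁻¹ • (1 + s i) with hL
  have hLherm : ∀ p ∈ L, p.IsHermitian := by
    intro p hp
    rw [hL, List.mem_ofFn] at hp
    obtain ⟨i, rfl⟩ := hp
    show _ = _
    rw [conjTranspose_smul, conjTranspose_add, conjTranspose_one, (hherm i).eq]
    norm_num
  have hLidem : ∀ p ∈ L, p * p = p := by
    intro p hp
    rw [hL, List.mem_ofFn] at hp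
    obtain ⟨i, rfl⟩ := hp
    have h2 : s i * s i = 1 := by rw [← pow_two]; exact hsq i
    have hsq2 : (1 + s i) * (1 + s i) = (2:ℂ) • (1 + s i) := by
      simp only [mul_add, add_mul, h2, one_mul, mul_one, two_smul]
      abel
    rw [smul_mul_smul_comm, hsq2, smul_smul]
    norm_num
  have hLcomm : L.Pairwise Commute := by
    rw [hL, List.pairwise_ofFn]
    intro i j _
    have h1 : Commute (1 + s i) (1 : Matrix (Fin N → Fin 2) (Fin N → Fin 2) ℂ) :=
      Commute.one_right _
    have h2 : Commute (1 + s i) (s j) := (Commute.one_left _).add_left (hcomm i j)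
    exact ((h1.add_right h2).smul_left _).smul_right _
  have hkey := key_psd L hLherm hLidem hLcomm
  have hsum : (L.map (fun p => 1 - p)).sum
      = ∑ i : Fin N, ((1 : Matrix (Fin N → Fin 2) (Fin N → Fin 2) ℂ) - (2:ℂ)⁻¹ • (1 + s i)) := by
    rw [hL, List.map_ofFn, List.sum_ofFn]
    rfl
  have hid : ((L.map (fun p => 1 - p)).sum + L.prod) - 1
      = ((((N : ℂ) - 1) / 2) • (1 : Matrix (Fin N → Fin 2) (Fin N → Fin 2) ℂ)
          - (2 : ℂ)⁻¹ • ∑ i, s i)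
        - ((2 : ℂ)⁻¹ • (1 : Matrix (Fin N → Fin 2) (Fin N → Fin 2) ℂ) - L.prod) := by
    rw [hsum, Finset.sum_sub_distrib, Finset.sum_const, ← Finset.smul_sum,
      Finset.sum_add_distrib, Finset.sum_const, Finset.card_univ, Fintype.card_fin]
    simp only [← Nat.cast_smul_eq_nsmul ℂ]
    module
  rw [ge_iff_le, ← sub_nonneg, ← Matrix.trace_sub, ← mul_sub, ← hid]
  exact trace_mul_nonneg hρ hkey
end

section
/- Let W be a set of n Pauli operators on N qubits with binary representation, and let M(W) be its N × C(n,2) pseudo-incidence matrix over F2, defined by M(W)_{μ,{i,j}} = 1 if the single-qubit factors s_{iμ}, s_{jμ} anticommute, and 0 otherwise. If R is an invertible n × n matrix over F2 and W^(R) is the recombined set with s_i^(R) = ∏_j s_j^{R_{ij}}, then the column space of M(W^(R)) over F2 equals the column space of M(W); in particular rank_{F2} M(W^(R)) = rank_{F2} M(W). -/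
open Matrix

/-- The pseudo-incidence matrix of a set of `n` Pauli operators on `N` qubits, given in the
binary picture by their `Z`-parts `z i` and `X`-parts `x i`: the `(μ, {i,j})` entry is `1`
iff the single-qubit factors of `sᵢ` and `sⱼ` anticommute at qubit `μ`, i.e.
`zᵢμ xⱼμ + zⱼμ xᵢμ = 1` over `F₂`. -/
def pseudoInc {n N : ℕ} (z x : Fin n → Fin N → ZMod 2) :
    Matrix (Fin N) (Sym2 (Fin n)) (ZMod 2) :=
  fun μ e => Sym2.lift ⟨fun i j => z i μ * x j μ + z j μ * x i μ, fun i j => by ring⟩ e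

lemma pseudoInc_comb {n N : ℕ} (z x : Fin n → Fin N → ZMod 2)
    (R : Matrix (Fin n) (Fin n) (ZMod 2)) (i j : Fin n) :
    (pseudoInc (fun i μ => ∑ j, R i j * z j μ) (fun i μ => ∑ j, R i j * x j μ))ᵀ s(i, j)
      = ∑ k, ∑ l, (R i k * R j l) • (pseudoInc z x)ᵀ s(k, l) := by
  funext μ
  simp only [transpose_apply, pseudoInc, Sym2.lift_mk, Finset.sum_apply, Pi.smul_apply,
    smul_eq_mul]
  rw [Finset.sum_mul_sum, Finset.sum_mul_sum]
  rw [show (∑ k, ∑ l, R j k * z k μ * (R i l * x l μ)) =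
    ∑ k, ∑ l, R j l * z l μ * (R i k * x k μ) from Finset.sum_comm]
  rw [← Finset.sum_add_distrib]
  refine Finset.sum_congr rfl fun k _ => ?_
  rw [← Finset.sum_add_distrib]
  exact Finset.sum_congr rfl fun l _ => by ring

lemma span_le_aux {n N : ℕ} (z x : Fin n → Fin N → ZMod 2)
    (R : Matrix (Fin n) (Fin n) (ZMod 2)) :
    Submodule.span (ZMod 2)
        (Set.range (pseudoInc (fun i μ => ∑ j, R i j * z j μ)
          (fun i μ => ∑ j, R i j * x j μ))ᵀ) ≤
      Submodule.span (ZMod 2) (Set.range (pseudoInc z x)ᵀ) := by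
  rw [Submodule.span_le]
  rintro _ ⟨e, rfl⟩
  induction e using Sym2.ind with
  | _ i j =>
    rw [pseudoInc_comb]
    exact Submodule.sum_mem _ fun k _ => Submodule.sum_mem _ fun l _ =>
      Submodule.smul_mem _ _ (Submodule.subset_span ⟨s(k, l), rfl⟩)

/-- Recombining the Pauli set by an invertible binary matrix `R`
(`sᵢ^(R) = ∏ⱼ sⱼ^{Rᵢⱼ}`, i.e. `F₂`-linear recombination of the binary vectors) preserves the
column space of the pseudo-incidence matrix, and in particular its `F₂`-rank. -/
theorem pseudoInc_column_space_invariant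
    {n N : ℕ} (z x : Fin n → Fin N → ZMod 2)
    (R : Matrix (Fin n) (Fin n) (ZMod 2)) [Invertible R] :
    Submodule.span (ZMod 2)
        (Set.range (pseudoInc (fun i μ => ∑ j, R i j * z j μ)
          (fun i μ => ∑ j, R i j * x j μ))ᵀ) =
      Submodule.span (ZMod 2) (Set.range (pseudoInc z x)ᵀ) ∧
    (pseudoInc (fun i μ => ∑ j, R i j * z j μ) (fun i μ => ∑ j, R i j * x j μ)).rank =
      (pseudoInc z x).rank := by
  have key : (fun i μ => ∑ j, (⅟R) i j * (∑ k, R j k * z k μ)) = z := by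
    funext i μ
    simp only [Finset.mul_sum, ← mul_assoc]
    rw [Finset.sum_comm]
    simp only [← Finset.sum_mul, ← Matrix.mul_apply, invOf_mul_self, Matrix.one_apply]
    simp
  have keyx : (fun i μ => ∑ j, (⅟R) i j * (∑ k, R j k * x k μ)) = x := by
    funext i μ
    simp only [Finset.mul_sum, ← mul_assoc]
    rw [Finset.sum_comm]
    simp only [← Finset.sum_mul, ← Matrix.mul_apply, invOf_mul_self, Matrix.one_apply]
    simp
  have hspan : Submodule.span (ZMod 2)
        (Set.range (pseudoInc (fun i μ => ∑ j, R i j * z j μ)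
          (fun i μ => ∑ j, R i j * x j μ))ᵀ) =
      Submodule.span (ZMod 2) (Set.range (pseudoInc z x)ᵀ) := by
    refine le_antisymm (span_le_aux z x R) ?_
    have := span_le_aux (fun i μ => ∑ j, R i j * z j μ) (fun i μ => ∑ j, R i j * x j μ) (⅟R)
    rwa [key, keyx] at this
  refine ⟨hspan, ?_⟩
  rw [Matrix.rank, Matrix.rank, Matrix.range_mulVecLin, Matrix.range_mulVecLin]
  exact congrArg (fun S : Submodule (ZMod 2) (Fin N → ZMod 2) => Module.finrank (ZMod 2) S) hspan
end
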